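/- arXiv:1204.5229 — 4 statements merged into one kernel-verified Lean document; each statement's English description precedes it below -/
import Mathlib

section
/- Let α be a linear order, m ≥ 1, X : Fin (5*m) → α, and let (t_i)_{i<m} be a family of group medians for X. Suppose x : α is a median of the medians, i.e., |{i < m : t_i ≤ x}| ≥ ⌈m/2⌉ and |{i < m : x ≤ t_i}| ≥ ⌈m/2⌉. Then 3·⌈m/2⌉ ≤ |{j : X j ≤ x}| and |{j : X j < x}| ≤ 5m − 3·⌈m/2⌉. (Hence the median of the group medians has rank between roughly 3n/10 and 7n/10 in the array of n = 5m elements.) -/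
/-- The `i`-th group of indices of an array of size `5 * m`:
the indices `5i, 5i+1, 5i+2, 5i+3, 5i+4`. -/
def group (m : ℕ) (i : Fin m) : Finset (Fin (5 * m)) :=
  Finset.univ.filter fun j => 5 * (i : ℕ) ≤ (j : ℕ) ∧ (j : ℕ) < 5 * (i : ℕ) + 5

/-- `t` is a median of group `i` of `X`: at least `3` elements of the group are `≤ t`
and at least `3` elements of the group are `≥ t`. -/
def IsGroupMedian {α : Type*} [LinearOrder α] {m : ℕ}
    (X : Fin (5 * m) → α) (i : Fin m) (t : α) : Prop :=
  3 ≤ ((group m i).filter fun j => X j ≤ t).card ∧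
  3 ≤ ((group m i).filter fun j => t ≤ X j).card

lemma group_disjoint (m : ℕ) {i i' : Fin m} (h : i ≠ i') :
    Disjoint (group m i) (group m i') := by
  rw [Finset.disjoint_left]
  intro j hj hj'
  simp only [group, Finset.mem_filter] at hj hj'
  apply h
  apply Fin.ext
  omega

lemma key {α : Type*} [LinearOrder α] {m : ℕ} (X : Fin (5 * m) → α)
    (P : α → Prop) [DecidablePred P] (S : Finset (Fin m))
    (hS : ∀ i ∈ S, 3 ≤ ((group m i).filter fun j => P (X j)).card) :
    3 * S.card ≤ (Finset.univ.filter fun j => P (X j)).card := by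
  calc 3 * S.card = ∑ _i ∈ S, 3 := by rw [Finset.sum_const]; ring
    _ ≤ ∑ i ∈ S, ((group m i).filter fun j => P (X j)).card :=
        Finset.sum_le_sum hS
    _ = (S.biUnion fun i => (group m i).filter fun j => P (X j)).card := by
        rw [Finset.card_biUnion]
        intro i _ i' _ h
        exact Finset.disjoint_filter_filter (group_disjoint m h)
    _ ≤ (Finset.univ.filter fun j => P (X j)).card := by
        apply Finset.card_le_card
        intro j hj
        simp only [Finset.mem_biUnion, Finset.mem_filter] at hj ⊢
        obtain ⟨i, _, _, hP⟩ := hj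
        exact ⟨Finset.mem_univ _, hP⟩

/-- A median `x` of the group medians has rank between roughly `3n/10` and `7n/10`
in the array of `n = 5m` elements. -/
theorem median_of_medians_rank {α : Type*} [LinearOrder α] {m : ℕ} (hm : 1 ≤ m)
    (X : Fin (5 * m) → α) (t : Fin m → α)
    (ht : ∀ i : Fin m, IsGroupMedian X i (t i)) (x : α)
    (hle : (m + 1) / 2 ≤ (Finset.univ.filter fun i : Fin m => t i ≤ x).card)
    (hge : (m + 1) / 2 ≤ (Finset.univ.filter fun i : Fin m => x ≤ t i).card) :
    3 * ((m + 1) / 2) ≤ (Finset.univ.filter fun j : Fin (5 * m) => X j ≤ x).card ∧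
    (Finset.univ.filter fun j : Fin (5 * m) => X j < x).card ≤ 5 * m - 3 * ((m + 1) / 2) := by
  constructor
  · calc 3 * ((m + 1) / 2) ≤ 3 * (Finset.univ.filter fun i : Fin m => t i ≤ x).card :=
          Nat.mul_le_mul_left _ hle
      _ ≤ _ := by
          apply key X (fun a => a ≤ x)
          intro i hi
          simp only [Finset.mem_filter] at hi
          refine le_trans (ht i).1 (Finset.card_le_card ?_)
          intro j hj
          simp only [Finset.mem_filter] at hj ⊢
          exact ⟨hj.1, le_trans hj.2 hi.2⟩
  · have h2 : 3 * ((m + 1) / 2) ≤ (Finset.univ.filter fun j : Fin (5 * m) => x ≤ X j).card := by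
      calc 3 * ((m + 1) / 2) ≤ 3 * (Finset.univ.filter fun i : Fin m => x ≤ t i).card :=
            Nat.mul_le_mul_left _ hge
        _ ≤ _ := by
            apply key X (fun a => x ≤ a)
            intro i hi
            simp only [Finset.mem_filter] at hi
            refine le_trans (ht i).2 (Finset.card_le_card ?_)
            intro j hj
            simp only [Finset.mem_filter] at hj ⊢
            exact ⟨hj.1, le_trans hi.2 hj.2⟩
    have hcompl : (Finset.univ.filter fun j : Fin (5 * m) => X j < x).card
        = 5 * m - (Finset.univ.filter fun j : Fin (5 * m) => x ≤ X j).card := by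
      have := Finset.card_filter_add_card_filter_not
        (s := (Finset.univ : Finset (Fin (5 * m)))) (p := fun j => x ≤ X j)
      simp only [not_le, Finset.card_univ, Fintype.card_fin] at this
      omega
    rw [hcompl]
    exact Nat.sub_le_sub_left h2 _
end

section
/- Let C, n₀ : ℕ and let T : ℕ → ℕ satisfy the recurrence T(n) ≤ T(⌈n/5⌉) + T(⌈7n/10⌉ + ⌈n/11⌉ + 6) + C·n for all n ≥ n₀. Then T is linearly bounded: there exists D : ℕ such that T(n) ≤ D·(n + 1) for all n : ℕ. (This is the running-time recurrence of the deterministic resilient selection algorithm; its linear solution gives the O(n) time bound in the fault-free case.) -/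
/-- The running-time recurrence `T(n) ≤ T(⌈n/5⌉) + T(⌈7n/10⌉ + ⌈n/11⌉ + 6) + C·n`
(for all `n ≥ n₀`) has a linear solution. -/
theorem select_recurrence_linear (C n₀ : ℕ) (T : ℕ → ℕ)
    (hT : ∀ n, n₀ ≤ n → T n ≤ T ((n + 4) / 5) + T ((7 * n + 9) / 10 + (n + 10) / 11 + 6) + C * n) :
    ∃ D : ℕ, ∀ n, T n ≤ D * (n + 1) := by
  refine ⟨max ((Finset.range (max n₀ 5000)).sup T) (440 * C), ?_⟩
  intro n
  induction n using Nat.strong_induction_on with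
  | _ n ih =>
    set N := max n₀ 5000 with hN
    set D := max ((Finset.range N).sup T) (440 * C) with hD
    by_cases h : n < N
    · have hle : T n ≤ (Finset.range N).sup T := Finset.le_sup (Finset.mem_range.mpr h)
      calc T n ≤ D := le_trans hle (le_max_left _ _)
        _ ≤ D * (n + 1) := Nat.le_mul_of_pos_right _ (by omega)
    · push_neg at h
      have hn0 : n₀ ≤ n := le_trans (le_max_left _ _) h
      have h5 : 5000 ≤ n := le_trans (le_max_right _ _) h
      have key : (n+4)/5 + ((7*n+9)/10 + (n+10)/11 + 6) + 1 + n/220 ≤ n := by omega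
      have hC : C * n ≤ D * (n / 220) := by
        have h1 : n ≤ 440 * (n / 220) := by omega
        calc C * n ≤ C * (440 * (n / 220)) := Nat.mul_le_mul_left _ h1
          _ = (440 * C) * (n / 220) := by ring
          _ ≤ D * (n / 220) := Nat.mul_le_mul_right _ (le_max_right _ _)
      have ha : (n+4)/5 < n := by omega
      have hb : (7*n+9)/10 + (n+10)/11 + 6 < n := by omega
      calc T n ≤ T ((n+4)/5) + T ((7*n+9)/10 + (n+10)/11 + 6) + C * n := hT n hn0
        _ ≤ D * ((n+4)/5 + 1) + D * ((7*n+9)/10 + (n+10)/11 + 6 + 1) + D * (n / 220) :=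
            add_le_add (add_le_add (ih _ ha) (ih _ hb)) hC
        _ = D * ((n+4)/5 + ((7*n+9)/10 + (n+10)/11 + 6) + 1 + n/220 + 1) := by ring
        _ ≤ D * (n + 1) := Nat.mul_le_mul_left _ (by omega)
end

section
/- Let α be a linear order, n : ℕ, and let X, X' : Fin n → α differ in at most β positions. Let p : ℕ with p < n, let e : α, and suppose X' i ≤ e for every index i with (i : ℕ) ≤ p. Let k, a : ℕ and suppose (k : ℤ) − a ≤ |{i : (i : ℕ) > p ∧ X' i ≤ e}| ≤ k + a. Then (p + 1 + k : ℤ) − a − β ≤ |{i : X i ≤ e}| ≤ (p + 1 + k) + a + β. (This is the induction step in the correctness proof of the randomized resilient selection algorithm: if the element e returned by the recursive call on the suffix X'[p+1, n] has rank within a of k there, and e dominates the whole prefix because e ≥ lb = x_p, then the rank of e in the original array X is within a + β of p + 1 + k, where β counts the corruptions of the current level.) -/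
/-- Induction step of the correctness proof of the randomized resilient selection
algorithm: if `e` dominates the prefix `X'[0..p]` and its rank in the suffix of `X'`
is within `a` of `k`, then its rank in `X` (a `β`-corruption of `X'`) is within
`a + β` of `p + 1 + k`. -/
theorem randomized_select_rank_step {α : Type*} [LinearOrder α] {n : ℕ}
    (X X' : Fin n → α) (β : ℕ)
    (hdiff : (Finset.univ.filter fun i : Fin n => X i ≠ X' i).card ≤ β)
    (p : ℕ) (hp : p < n) (e : α)
    (hprefix : ∀ i : Fin n, (i : ℕ) ≤ p → X' i ≤ e)
    (k a : ℕ)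
    (hlow : (k : ℤ) - a ≤
      ((Finset.univ.filter fun i : Fin n => (i : ℕ) > p ∧ X' i ≤ e).card : ℤ))
    (hhigh : ((Finset.univ.filter fun i : Fin n => (i : ℕ) > p ∧ X' i ≤ e).card : ℤ) ≤
      (k : ℤ) + a) :
    (p + 1 + k : ℤ) - a - β ≤ ((Finset.univ.filter fun i : Fin n => X i ≤ e).card : ℤ) ∧
    ((Finset.univ.filter fun i : Fin n => X i ≤ e).card : ℤ) ≤ (p + 1 + k : ℤ) + a + β := by
  classical
  set A := Finset.univ.filter fun i : Fin n => X i ≤ e with hA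
  set B := Finset.univ.filter fun i : Fin n => X' i ≤ e with hB
  set D := Finset.univ.filter fun i : Fin n => X i ≠ X' i with hD
  set S := Finset.univ.filter fun i : Fin n => (i : ℕ) > p ∧ X' i ≤ e with hS
  set P := Finset.univ.filter fun i : Fin n => (i : ℕ) ≤ p with hP
  -- card of prefix
  have hPcard : P.card = p + 1 := by
    have : P.card = ((Finset.range (p + 1)).card) := by
      refine Finset.card_bij (fun i _ => (i : ℕ)) ?_ ?_ ?_
      · intro i hi
        simp only [hP, Finset.mem_filter] at hi
        simp [Finset.mem_range]; omega
      · intro i hi j hj h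
        exact Fin.val_injective h
      · intro m hm
        simp only [Finset.mem_range] at hm
        refine ⟨⟨m, by omega⟩, ?_, rfl⟩
        simp [hP]; omega
    simpa using this
  -- B = P ∪ S
  have hBPS : B = P ∪ S := by
    ext i
    simp only [hB, hP, hS, Finset.mem_filter, Finset.mem_union, Finset.mem_univ, true_and]
    constructor
    · intro h
      by_cases hip : (i : ℕ) ≤ p
      · exact Or.inl hip
      · exact Or.inr ⟨by omega, h⟩
    · rintro (hip | ⟨_, h⟩)
      · exact hprefix i hip
      · exact h
  have hdisj : Disjoint P S := by
    rw [Finset.disjoint_left]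
    intro i hi hi'
    simp only [hP, hS, Finset.mem_filter] at hi hi'
    omega
  have hBcard : B.card = p + 1 + S.card := by
    rw [hBPS, Finset.card_union_of_disjoint hdisj, hPcard]
  -- |A| close to |B|
  have hAB : A ⊆ B ∪ D := by
    intro i hi
    simp only [hA, hB, hD, Finset.mem_filter, Finset.mem_union, Finset.mem_univ, true_and] at *
    by_cases h : X i = X' i
    · exact Or.inl (h ▸ hi)
    · exact Or.inr h
  have hBA : B ⊆ A ∪ D := by
    intro i hi
    simp only [hA, hB, hD, Finset.mem_filter, Finset.mem_union, Finset.mem_univ, true_and] at *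
    by_cases h : X i = X' i
    · exact Or.inl (h ▸ hi)
    · exact Or.inr h
  have h1 : A.card ≤ B.card + D.card :=
    le_trans (Finset.card_le_card hAB) (Finset.card_union_le _ _)
  have h2 : B.card ≤ A.card + D.card :=
    le_trans (Finset.card_le_card hBA) (Finset.card_union_le _ _)
  constructor <;> omega
end

section
/- Let L : ℕ and let i, j : ℕ satisfy i < j < 2^L. Then there exists d with 1 ≤ d ≤ L such that i / 2^(L−d+1) = j / 2^(L−d+1) and j / 2^(L−d) = i / 2^(L−d) + 1 (natural-number division). (This is the structural fact behind the correctness of the iterative resilient Quicksort: for any two positions i < j in an array of length 2^L there is a round d of the doubling loop at which i and j lie in the same block of size 2^(L−d+1) but i lies in its left half and j in its right half, so the split at that round places the smaller uncorrupted element before the larger one permanently.) -/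
/-- For any two positions `i < j` in an array of length `2^L`, there is a round `d`
of the doubling loop at which `i` and `j` lie in the same block of size `2^(L-d+1)`,
with `i` in its left half and `j` in its right half. -/
theorem quicksort_split_round (L i j : ℕ) (hij : i < j) (hj : j < 2 ^ L) :
    ∃ d : ℕ, 1 ≤ d ∧ d ≤ L ∧
      i / 2 ^ (L - d + 1) = j / 2 ^ (L - d + 1) ∧
      j / 2 ^ (L - d) = i / 2 ^ (L - d) + 1 := by
  classical
  set P : ℕ → Prop := fun k => i / 2 ^ k < j / 2 ^ k with hPdef
  have hP0 : P 0 := by simpa [hPdef] using hij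
  have hPL : ¬ P L := by
    simp [hPdef, Nat.div_eq_of_lt hj, Nat.div_eq_of_lt (lt_trans hij hj)]
  set k := Nat.findGreatest P L with hk
  have hkspec : P k := Nat.findGreatest_spec (Nat.zero_le L) hP0
  have hkle : k ≤ L := Nat.findGreatest_le L
  have hklt : k < L := lt_of_le_of_ne hkle fun h => hPL (h ▸ hkspec)
  have hnot : ¬ P (k + 1) := Nat.findGreatest_is_greatest (Nat.lt_succ_self k) hklt
  have hle : i / 2 ^ (k + 1) ≤ j / 2 ^ (k + 1) := Nat.div_le_div_right hij.le
  have heq : i / 2 ^ (k + 1) = j / 2 ^ (k + 1) := by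
    simp only [hPdef, not_lt] at hnot
    omega
  have h2 : i / 2 ^ k / 2 = j / 2 ^ k / 2 := by
    rwa [Nat.div_div_eq_div_mul, Nat.div_div_eq_div_mul, ← pow_succ]
  have hkstrict : i / 2 ^ k < j / 2 ^ k := hkspec
  refine ⟨L - k, by omega, by omega, ?_, ?_⟩
  · have h1 : L - (L - k) + 1 = k + 1 := by omega
    rw [h1]; exact heq
  · have h1 : L - (L - k) = k := by omega
    rw [h1]; omega
end
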